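/- arXiv:1002.1357 — 2 statements merged into one kernel-verified Lean document; each statement's English description precedes it below -/
import Mathlib

section
/- Let $g_{00}, g_{01}, g_{11} : \mathbb{R}^{12} \to \mathbb{R}$ be the induced-metric coefficients of the string system and let $\lambda_- = \dfrac{-g_{01} - \sqrt{g_{01}^2 - g_{00}g_{11}}}{g_{11}}$, viewed as a smooth function of the state $U \in \mathbb{R}^{12}$ on the region where $g_{11} \neq 0$ and $g_{00}g_{11} - g_{01}^2 < 0$. For each of the right eigenvectors $r_i = (0,0,0,0,-\lambda_- e_{i-4}, e_{i-4})^T$ ($i = 5,6,7,8$) one has $\nabla \lambda_- \cdot r_i = -\lambda_- \dfrac{\partial \lambda_-}{\partial U^i} + \dfrac{\partial \lambda_-}{\partial U^{i+4}} = 0$, i.e. the characteristic field $\lambda_-$ is linearly degenerate in the sense of Lax. -/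
open Real

/-- Spatial Euclidean inner product of the spatial parts (indices 1,2,3) of
four-vectors `u v : Fin 4 → ℝ`. -/
noncomputable def spInner (u v : Fin 4 → ℝ) : ℝ :=
  ∑ i : Fin 3, u i.succ * v i.succ

/-- `r = |u|`, the Euclidean norm of the spatial part. -/
noncomputable def spNorm (u : Fin 4 → ℝ) : ℝ := Real.sqrt (spInner u u)

/-- The Schwarzschild bilinear form (in Cartesian coordinates) evaluated on the
pair of four-vectors `(v, w)` at spatial position given by the spatial part of `u`. -/
noncomputable def schwForm (m : ℝ) (u v w : Fin 4 → ℝ) : ℝ :=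
  -((spNorm u - 2 * m) / spNorm u) * (v 0 * w 0) + spInner v w
    + (2 * m / ((spNorm u) ^ 2 * (spNorm u - 2 * m))) * (spInner u v * spInner u w)

/-- Induced metric coefficients as functions of the state `U = (u, v, w)`. -/
noncomputable def g00 (m : ℝ) (U : (Fin 4 → ℝ) × (Fin 4 → ℝ) × (Fin 4 → ℝ)) : ℝ :=
  schwForm m U.1 U.2.1 U.2.1
noncomputable def g01 (m : ℝ) (U : (Fin 4 → ℝ) × (Fin 4 → ℝ) × (Fin 4 → ℝ)) : ℝ :=
  schwForm m U.1 U.2.1 U.2.2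
noncomputable def g11 (m : ℝ) (U : (Fin 4 → ℝ) × (Fin 4 → ℝ) × (Fin 4 → ℝ)) : ℝ :=
  schwForm m U.1 U.2.2 U.2.2

/-- The characteristic speed `λ₋` as a function of the state. -/
noncomputable def lamMinus (m : ℝ) (U : (Fin 4 → ℝ) × (Fin 4 → ℝ) × (Fin 4 → ℝ)) : ℝ :=
  (-g01 m U - Real.sqrt ((g01 m U) ^ 2 - g00 m U * g11 m U)) / g11 m U

/-! ### Auxiliary lemmas -/

lemma spInner_comm (u v : Fin 4 → ℝ) : spInner u v = spInner v u :=
  Finset.sum_congr rfl fun i _ => mul_comm _ _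

lemma schwForm_comm (m : ℝ) (u v w : Fin 4 → ℝ) :
    schwForm m u v w = schwForm m u w v := by
  unfold schwForm
  rw [spInner_comm v w]
  ring

lemma spInner_add_smul_left (v x y : Fin 4 → ℝ) (a : ℝ) :
    spInner (v + a • x) y = spInner v y + a * spInner x y := by
  unfold spInner
  rw [Finset.mul_sum, ← Finset.sum_add_distrib]
  refine Finset.sum_congr rfl fun i _ => ?_
  simp only [Pi.add_apply, Pi.smul_apply, smul_eq_mul]
  ring

lemma spInner_add_smul_right (v x y : Fin 4 → ℝ) (a : ℝ) :
    spInner y (v + a • x) = spInner y v + a * spInner y x := by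
  rw [spInner_comm, spInner_add_smul_left, spInner_comm v y, spInner_comm x y]

/-- Bilinearity of `schwForm` in its last two arguments. -/
lemma schwForm_expand (m : ℝ) (u v w x y : Fin 4 → ℝ) (a b : ℝ) :
    schwForm m u (v + a • x) (w + b • y)
      = schwForm m u v w + b * schwForm m u v y + a * schwForm m u x w
        + a * b * schwForm m u x y := by
  unfold schwForm
  simp only [spInner_add_smul_left, spInner_add_smul_right, Pi.add_apply,
    Pi.smul_apply, smul_eq_mul]
  ring

lemma differentiableAt_spInner2 {E : Type*} [NormedAddCommGroup E] [NormedSpace ℝ E]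
    {f g : E → (Fin 4 → ℝ)} {x : E}
    (hf : DifferentiableAt ℝ f x) (hg : DifferentiableAt ℝ g x) :
    DifferentiableAt ℝ (fun y => spInner (f y) (g y)) x := by
  unfold spInner
  exact DifferentiableAt.fun_sum fun (i : Fin 3) _ =>
    (differentiableAt_pi.mp hf i.succ).mul (differentiableAt_pi.mp hg i.succ)

lemma differentiableAt_spNorm {E : Type*} [NormedAddCommGroup E] [NormedSpace ℝ E]
    {f : E → (Fin 4 → ℝ)} {x : E}
    (hf : DifferentiableAt ℝ f x) (h : spInner (f x) (f x) ≠ 0) :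
    DifferentiableAt ℝ (fun y => spNorm (f y)) x := by
  unfold spNorm
  exact (differentiableAt_spInner2 hf hf).sqrt h

lemma differentiableAt_schwForm {E : Type*} [NormedAddCommGroup E] [NormedSpace ℝ E]
    {f g h : E → (Fin 4 → ℝ)} {x : E} {m : ℝ}
    (hf : DifferentiableAt ℝ f x) (hg : DifferentiableAt ℝ g x)
    (hh : DifferentiableAt ℝ h x)
    (h1 : spNorm (f x) ≠ 0) (h2 : spNorm (f x) - 2 * m ≠ 0) :
    DifferentiableAt ℝ (fun y => schwForm m (f y) (g y) (h y)) x := by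
  have hq : spInner (f x) (f x) ≠ 0 := fun h0 => h1 (by simp [spNorm, h0])
  have hN : DifferentiableAt ℝ (fun y => spNorm (f y)) x := differentiableAt_spNorm hf hq
  have hg0 : DifferentiableAt ℝ (fun y => g y 0) x := differentiableAt_pi.mp hg 0
  have hh0 : DifferentiableAt ℝ (fun y => h y 0) x := differentiableAt_pi.mp hh 0
  have hNm : DifferentiableAt ℝ (fun y => spNorm (f y) - 2 * m) x := hN.sub_const (2 * m)
  have hfrac1 : DifferentiableAt ℝ (fun y => (spNorm (f y) - 2 * m) / spNorm (f y)) x := by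
    simp only [div_eq_mul_inv]
    exact hNm.mul (hN.inv h1)
  have hden : DifferentiableAt ℝ (fun y => spNorm (f y) ^ 2 * (spNorm (f y) - 2 * m)) x :=
    (hN.pow 2).mul hNm
  have hfrac2 : DifferentiableAt ℝ
      (fun y => 2 * m / (spNorm (f y) ^ 2 * (spNorm (f y) - 2 * m))) x := by
    simp only [div_eq_mul_inv]
    exact (differentiableAt_const (2 * m)).mul
      (hden.inv (mul_ne_zero (pow_ne_zero 2 h1) h2))
  unfold schwForm
  refine DifferentiableAt.add (DifferentiableAt.add ?_ ?_) ?_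
  · exact hfrac1.neg.mul (hg0.mul hh0)
  · exact differentiableAt_spInner2 hg hh
  · exact hfrac2.mul ((differentiableAt_spInner2 hf hg).mul (differentiableAt_spInner2 hf hh))

/-- Linear degeneracy of the `λ₋` characteristic field: the gradient of `λ₋`
annihilates each right eigenvector `r_i = (0, -λ₋ e_i, e_i)`. -/
theorem lamMinus_linearly_degenerate
    (m : ℝ) (hm : 0 < m)
    (U : (Fin 4 → ℝ) × (Fin 4 → ℝ) × (Fin 4 → ℝ))
    (hr : 2 * m < spNorm U.1)
    (hg11 : g11 m U ≠ 0)
    (hdisc : g00 m U * g11 m U - (g01 m U) ^ 2 < 0)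
    (i : Fin 4) :
    fderiv ℝ (lamMinus m) U
      ((0 : Fin 4 → ℝ), -(lamMinus m U) • (Pi.single i 1 : Fin 4 → ℝ), (Pi.single i 1 : Fin 4 → ℝ)) = 0 := by
  set u : Fin 4 → ℝ := U.1 with hu
  set v : Fin 4 → ℝ := U.2.1 with hv
  set w : Fin 4 → ℝ := U.2.2 with hw
  set e : Fin 4 → ℝ := (Pi.single i 1 : Fin 4 → ℝ) with he
  set lam : ℝ := lamMinus m U with hlam
  set d : (Fin 4 → ℝ) × (Fin 4 → ℝ) × (Fin 4 → ℝ) :=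
    ((0 : Fin 4 → ℝ), -lam • e, e) with hd
  -- basic positivity facts
  have hrpos : (0 : ℝ) < spNorm u := lt_trans (by linarith) hr
  have h1 : spNorm u ≠ 0 := ne_of_gt hrpos
  have h2 : spNorm u - 2 * m ≠ 0 := sub_ne_zero.mpr (ne_of_gt hr)
  -- abbreviations for metric coefficients and expansion constants
  set A : ℝ := g00 m U with hA
  set B : ℝ := g01 m U with hB
  set C : ℝ := g11 m U with hC
  set P : ℝ := schwForm m u v e with hP
  set Q : ℝ := schwForm m u w e with hQ
  set Rr : ℝ := schwForm m u e e with hRr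
  set D : ℝ := B ^ 2 - A * C with hD
  have hDpos : 0 < D := by rw [hD]; linarith
  have hsq : Real.sqrt D ^ 2 = D := Real.sq_sqrt hDpos.le
  have hsqrtpos : 0 < Real.sqrt D := Real.sqrt_pos.mpr hDpos
  -- lam satisfies the quadratic equation
  have h1' : lam * C = -B - Real.sqrt D := by
    rw [hlam, lamMinus, ← hB, ← hA, ← hC, ← hD]
    field_simp
  have hquadC : C * (A + 2 * B * lam + C * lam ^ 2) = 0 := by
    linear_combination (lam * C + B - Real.sqrt D) * h1' + hsq
  have hquad : A + 2 * B * lam + C * lam ^ 2 = 0 :=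
    (mul_eq_zero.mp hquadC).resolve_left hg11
  -- the line through U in direction d
  have hU1 : ∀ t : ℝ, (U + t • d).1 = u := by
    intro t; simp [hd, hu]
  have hU2 : ∀ t : ℝ, (U + t • d).2.1 = v + (-(t * lam)) • e := by
    intro t
    show v + t • (-lam • e) = v + (-(t * lam)) • e
    rw [smul_smul, mul_neg]
  have hU3 : ∀ t : ℝ, (U + t • d).2.2 = w + t • e := by
    intro t; rfl
  -- metric coefficients along the line
  have hAv : schwForm m u v v = A := rfl
  have hBv : schwForm m u v w = B := rfl
  have hCv : schwForm m u w w = C := rfl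
  have hg00t : ∀ t : ℝ, g00 m (U + t • d)
      = A - 2 * (t * lam) * P + (t * lam) ^ 2 * Rr := by
    intro t
    show schwForm m (U + t • d).1 (U + t • d).2.1 (U + t • d).2.1 = _
    rw [hU1, hU2, schwForm_expand, schwForm_comm m u e v, hAv, ← hP, ← hRr]
    ring
  have hg01t : ∀ t : ℝ, g01 m (U + t • d)
      = B + t * P - t * lam * Q - t ^ 2 * lam * Rr := by
    intro t
    show schwForm m (U + t • d).1 (U + t • d).2.1 (U + t • d).2.2 = _
    rw [hU1, hU2, hU3, schwForm_expand, schwForm_comm m u e w, hBv, ← hP, ← hQ, ← hRr]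
    ring
  have hg11t : ∀ t : ℝ, g11 m (U + t • d) = C + 2 * t * Q + t ^ 2 * Rr := by
    intro t
    show schwForm m (U + t • d).1 (U + t • d).2.2 (U + t • d).2.2 = _
    rw [hU1, hU3, schwForm_expand, schwForm_comm m u e w, hCv, ← hQ, ← hRr]
    ring
  -- the auxiliary linear function s(t)
  set st : ℝ → ℝ := fun t => (B + lam * C) + t * (P + lam * Q) with hst
  have hsum : ∀ t : ℝ, g01 m (U + t • d) + lam * g11 m (U + t • d) = st t := by
    intro t
    rw [hg01t, hg11t, hst]
    ring
  have hdisct : ∀ t : ℝ,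
      (g01 m (U + t • d)) ^ 2 - g00 m (U + t • d) * g11 m (U + t • d) = (st t) ^ 2 := by
    intro t
    rw [hg01t, hg00t, hg11t, hst]
    linear_combination (-(C + 2 * t * Q + t ^ 2 * Rr)) * hquad
  have hst0 : st 0 = -Real.sqrt D := by
    rw [hst]; simp; linarith [h1']
  -- eventual facts near t = 0
  have hstcont : Continuous st := by
    rw [hst]; fun_prop
  have hq11cont : Continuous (fun t : ℝ => C + 2 * t * Q + t ^ 2 * Rr) := by fun_prop
  have hev1 : ∀ᶠ t in nhds (0 : ℝ), st t < 0 := by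
    have : st 0 < 0 := by rw [hst0]; linarith
    exact (hstcont.tendsto 0).eventually_lt_const this
  have hev2 : ∀ᶠ t in nhds (0 : ℝ), C + 2 * t * Q + t ^ 2 * Rr ≠ 0 := by
    have := (hq11cont.tendsto 0)
    have h0 : C + 2 * (0 : ℝ) * Q + (0 : ℝ) ^ 2 * Rr = C := by ring
    rw [h0] at this
    exact this.eventually_ne hg11
  have hev : ∀ᶠ t in nhds (0 : ℝ), lamMinus m (U + t • d) = lam := by
    filter_upwards [hev1, hev2] with t hlt hne
    have hg11ne : g11 m (U + t • d) ≠ 0 := by rw [hg11t]; exact hne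
    show (-g01 m (U + t • d) - Real.sqrt ((g01 m (U + t • d)) ^ 2
        - g00 m (U + t • d) * g11 m (U + t • d))) / g11 m (U + t • d) = lam
    rw [hdisct, Real.sqrt_sq_eq_abs, abs_of_neg hlt]
    have hs' : st t = g01 m (U + t • d) + lam * g11 m (U + t • d) := (hsum t).symm
    rw [hs']
    field_simp
    ring
  -- differentiability of lamMinus at U
  have hdg00 : DifferentiableAt ℝ (g00 m) U :=
    differentiableAt_schwForm differentiableAt_fst
      (differentiableAt_snd.fst) (differentiableAt_snd.fst) h1 h2
  have hdg01 : DifferentiableAt ℝ (g01 m) U :=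
    differentiableAt_schwForm differentiableAt_fst
      (differentiableAt_snd.fst) (differentiableAt_snd.snd) h1 h2
  have hdg11 : DifferentiableAt ℝ (g11 m) U :=
    differentiableAt_schwForm differentiableAt_fst
      (differentiableAt_snd.snd) (differentiableAt_snd.snd) h1 h2
  have hDne : (g01 m U) ^ 2 - g00 m U * g11 m U ≠ 0 := by
    rw [← hA, ← hB, ← hC, ← hD]; exact hDpos.ne'
  have hdiffU : DifferentiableAt ℝ (lamMinus m) U := by
    unfold lamMinus
    simp only [div_eq_mul_inv]
    exact (hdg01.neg.sub (((hdg01.pow 2).sub (hdg00.mul hdg11)).sqrt hDne)).mul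
      (hdg11.inv hg11)
  -- conclude via the derivative along the line
  have hline : HasDerivAt (fun t : ℝ => U + t • d) d 0 := by
    simpa using ((hasDerivAt_id (0 : ℝ)).smul_const d).const_add U
  have hcomp : HasDerivAt (fun t : ℝ => lamMinus m (U + t • d))
      (fderiv ℝ (lamMinus m) U d) 0 := by
    have h00 : U + (0 : ℝ) • d = U := by simp
    have hfd : HasFDerivAt (lamMinus m) (fderiv ℝ (lamMinus m) U) (U + (0 : ℝ) • d) := by
      rw [h00]; exact hdiffU.hasFDerivAt
    exact hfd.comp_hasDerivAt 0 hline
  have hconst : HasDerivAt (fun t : ℝ => lamMinus m (U + t • d)) 0 0 :=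
    (hasDerivAt_const (0 : ℝ) lam).congr_of_eventuallyEq hev
  exact hcomp.unique hconst
end

section
/- Let $\lambda_\pm : \mathbb{R}^+ \times \mathbb{R} \to \mathbb{R}$ be $C^1$ functions satisfying the system $\partial_t \lambda_- + \lambda_+ \partial_\theta \lambda_- = 0$ and $\partial_t \lambda_+ + \lambda_- \partial_\theta \lambda_+ = 0$, with $\lambda_+(t,\theta) > \lambda_-(t,\theta)$ everywhere. Then the conservation-law identity $\partial_t\left(\dfrac{2}{\lambda_+ - \lambda_-}\right) + \partial_\theta\left(\dfrac{\lambda_+ + \lambda_-}{\lambda_+ - \lambda_-}\right) = 0$ holds. -/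
/-- The conservation-law identity (4.16): if `λ₋, λ₊` satisfy
`∂_t λ₋ + λ₊ ∂_θ λ₋ = 0` and `∂_t λ₊ + λ₋ ∂_θ λ₊ = 0` with `λ₊ > λ₋` on
`ℝ⁺ × ℝ`, then `∂_t (2/(λ₊-λ₋)) + ∂_θ ((λ₊+λ₋)/(λ₊-λ₋)) = 0`. -/
theorem conservation_identity
    (lamP lamM : ℝ × ℝ → ℝ)
    (hdiffP : ∀ p : ℝ × ℝ, 0 < p.1 → DifferentiableAt ℝ lamP p)
    (hdiffM : ∀ p : ℝ × ℝ, 0 < p.1 → DifferentiableAt ℝ lamM p)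
    (hsep : ∀ p : ℝ × ℝ, 0 < p.1 → lamM p < lamP p)
    (heqM : ∀ p : ℝ × ℝ, 0 < p.1 →
      fderiv ℝ lamM p (1, 0) + lamP p * fderiv ℝ lamM p (0, 1) = 0)
    (heqP : ∀ p : ℝ × ℝ, 0 < p.1 →
      fderiv ℝ lamP p (1, 0) + lamM p * fderiv ℝ lamP p (0, 1) = 0) :
    ∀ p : ℝ × ℝ, 0 < p.1 →
      fderiv ℝ (fun q => 2 / (lamP q - lamM q)) p (1, 0)
        + fderiv ℝ (fun q => (lamP q + lamM q) / (lamP q - lamM q)) p (0, 1) = 0 := by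
  intro p hp
  have hP := (hdiffP p hp).hasFDerivAt
  have hM := (hdiffM p hp).hasFDerivAt
  have hne : lamP p - lamM p ≠ 0 := sub_ne_zero.mpr (hsep p hp).ne'
  have hd : HasFDerivAt (fun q => lamP q - lamM q)
      (fderiv ℝ lamP p - fderiv ℝ lamM p) p := hP.sub hM
  have hs : HasFDerivAt (fun q => lamP q + lamM q)
      (fderiv ℝ lamP p + fderiv ℝ lamM p) p := hP.add hM
  have hinv : HasFDerivAt (fun q => (lamP q - lamM q)⁻¹)
      ((-((lamP p - lamM p) ^ 2)⁻¹) • (fderiv ℝ lamP p - fderiv ℝ lamM p)) p :=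
    (hasDerivAt_inv hne).comp_hasFDerivAt p hd
  have h1 : HasFDerivAt (fun q => 2 / (lamP q - lamM q))
      ((2:ℝ) • ((-((lamP p - lamM p) ^ 2)⁻¹) • (fderiv ℝ lamP p - fderiv ℝ lamM p))) p := by
    simpa [div_eq_mul_inv] using hinv.const_mul (2:ℝ)
  have h2 : HasFDerivAt (fun q => (lamP q + lamM q) / (lamP q - lamM q))
      ((lamP p + lamM p) • ((-((lamP p - lamM p) ^ 2)⁻¹) • (fderiv ℝ lamP p - fderiv ℝ lamM p))
        + ((lamP p - lamM p)⁻¹) • (fderiv ℝ lamP p + fderiv ℝ lamM p)) p := by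
    simpa [div_eq_mul_inv, Pi.mul_def] using hs.mul hinv
  rw [h1.fderiv, h2.fderiv]
  have e1 := heqM p hp
  have e2 := heqP p hp
  set A := fderiv ℝ lamP p (1, 0)
  set B := fderiv ℝ lamP p (0, 1)
  set C := fderiv ℝ lamM p (1, 0)
  set D := fderiv ℝ lamM p (0, 1)
  simp only [ContinuousLinearMap.smul_apply, ContinuousLinearMap.sub_apply,
    ContinuousLinearMap.add_apply, ContinuousLinearMap.zero_apply, smul_eq_mul]
  field_simp
  linear_combination 2 * e1 - 2 * e2
end
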